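/- Higher-order CBF nesting: let b₀ : [0,∞) → ℝ be C¹ and define b₁(t) := b₀'(t) + α₀(b₀(t)) where α₀ is locally Lipschitz, nondecreasing, α₀(0) = 0. If b₀(0) ≥ 0 and b₁(t) ≥ 0 for all t ≥ 0, then b₀(t) ≥ 0 for all t ≥ 0. -/

import Mathlib

theorem hocbf_nesting
    (b₀ : ℝ → ℝ) (hC1 : ContDiff ℝ 1 b₀)
    (α₀ : ℝ → ℝ) (hlip : LocallyLipschitz α₀) (hmono : Monotone α₀) (hα0 : α₀ 0 = 0)
    (b₁ : ℝ → ℝ) (hb₁ : ∀ t, b₁ t = deriv b₀ t + α₀ (b₀ t))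
    (h0 : 0 ≤ b₀ 0)
    (hpos : ∀ t, 0 ≤ t → 0 ≤ b₁ t) :
    ∀ t, 0 ≤ t → 0 ≤ b₀ t := by
  intro t ht
  by_contra hneg
  push_neg at hneg
  have hcont : Continuous b₀ := hC1.continuous
  set S : Set ℝ := Set.Icc 0 t ∩ b₀ ⁻¹' Set.Ici 0 with hSdef
  have hS0 : (0:ℝ) ∈ S := ⟨⟨le_refl 0, ht⟩, h0⟩
  have hSne : S.Nonempty := ⟨0, hS0⟩
  have hScl : IsClosed S := isClosed_Icc.inter (isClosed_Ici.preimage hcont)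
  have hBdd : BddAbove S := ⟨t, fun x hx => hx.1.2⟩
  set s := sSup S with hsdef
  have hsS : s ∈ S := hScl.csSup_mem hSne hBdd
  obtain ⟨⟨hs0, hst⟩, hbs⟩ := hsS
  have hbs' : 0 ≤ b₀ s := hbs
  have hslt : s < t := hst.lt_of_ne (fun h => not_le.mpr hneg (h ▸ hbs'))
  have hIooneg : ∀ u ∈ Set.Ioo s t, b₀ u < 0 := by
    intro u hu
    by_contra hge
    push_neg at hge
    have : u ∈ S := ⟨⟨le_trans hs0 hu.1.le, hu.2.le⟩, hge⟩
    exact absurd (le_csSup hBdd this) (not_le.mpr hu.1)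
  have hdiff : Differentiable ℝ b₀ := hC1.differentiable one_ne_zero
  have hmonoOn : MonotoneOn b₀ (Set.Icc s t) := by
    apply monotoneOn_of_deriv_nonneg (convex_Icc s t) hcont.continuousOn
    · intro u _
      exact (hdiff u).differentiableWithinAt
    · intro u hu
      rw [interior_Icc] at hu
      have hu0 : 0 ≤ u := le_trans hs0 hu.1.le
      have h1 := hpos u hu0
      rw [hb₁ u] at h1
      have hα : α₀ (b₀ u) ≤ 0 := by
        calc α₀ (b₀ u) ≤ α₀ 0 := hmono (hIooneg u hu).le
        _ = 0 := hα0
      linarith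
  have := hmonoOn ⟨le_refl s, hslt.le⟩ ⟨hslt.le, le_refl t⟩ hslt.le
  linarith
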